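/- For every real s > 0, the integral ∫_{−∞}^{∞} Ai(u) · e^{s u} du converges absolutely and equals e^{s³/3}. In particular, for t > 0 and every positive integer n, e^{t n³ / 24} = ∫_{−∞}^{∞} Ai(u) · e^{(t/8)^{1/3} n u} du. -/

import Mathlib

open Filter Real MeasureTheory

/-- The Airy function, defined for real `u` by the improper integral
`Ai(u) = (1/π) ∫₀^∞ cos(t³/3 + u t) dt`, understood as the limit of
`∫₀^R cos(t³/3 + u t) dt` as `R → ∞`. -/
noncomputable def Ai (u : ℝ) : ℝ :=
  (1 / Real.pi) *
    limUnder Filter.atTop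
      (fun R : ℝ => ∫ t in (0:ℝ)..R, Real.cos (t ^ 3 / 3 + u * t))

open Complex Set FourierTransform

namespace AiryAux

/-- the integrand of the Airy integral, complexified -/
noncomputable def φf (u : ℝ) (z : ℂ) : ℂ := Complex.exp (Complex.I * (z ^ 3 / 3 + u * z))

lemma key_ident (u x y : ℝ) :
    Complex.I * (((x:ℂ) + (y:ℂ) * I) ^ 3 / 3 + (u:ℂ) * ((x:ℂ) + (y:ℂ) * I)) =
      ((y ^ 3 / 3 - u * y - x ^ 2 * y : ℝ) : ℂ) + ((x ^ 3 / 3 + u * x - x * y ^ 2 : ℝ) : ℂ) * I := by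
  push_cast
  linear_combination (u * y + x ^ 2 * y - y ^ 3 / 3 + x * y ^ 2 * Complex.I
    + (y ^ 3 / 3) * Complex.I ^ 2) * Complex.I_sq

lemma φf_apply (u x y : ℝ) :
    φf u ((x:ℂ) + (y:ℂ) * I) =
      Complex.exp (((y ^ 3 / 3 - u * y - x ^ 2 * y : ℝ) : ℂ)
        + ((x ^ 3 / 3 + u * x - x * y ^ 2 : ℝ) : ℂ) * I) := by
  rw [φf, key_ident]

lemma φf_re (u x y : ℝ) :
    (φf u ((x:ℂ) + (y:ℂ) * I)).re =
      rexp (y ^ 3 / 3 - u * y - x ^ 2 * y) * Real.cos (x ^ 3 / 3 + u * x - x * y ^ 2) := by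
  rw [φf_apply, Complex.exp_re]
  simp [← Complex.ofReal_pow]

lemma φf_norm (u x y : ℝ) :
    ‖φf u ((x:ℂ) + (y:ℂ) * I)‖ = rexp (y ^ 3 / 3 - u * y - x ^ 2 * y) := by
  rw [φf_apply, Complex.norm_exp]
  simp [← Complex.ofReal_pow]

lemma φf_diff (u : ℝ) : Differentiable ℂ (φf u) := by
  unfold φf
  fun_prop

lemma φf_cont (u : ℝ) : Continuous (φf u) := (φf_diff u).continuous

/-- Cauchy's theorem on the rectangle `[0,R] × [0,s]`. -/
lemma rect (u s R : ℝ) :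
    (∫ x in (0:ℝ)..R, φf u x) =
      (∫ x in (0:ℝ)..R, φf u ((x:ℂ) + (s:ℂ) * I))
        + I • (∫ y in (0:ℝ)..s, φf u ((y:ℂ) * I))
        - I • (∫ y in (0:ℝ)..s, φf u ((R:ℂ) + (y:ℂ) * I)) := by
  have h := Complex.integral_boundary_rect_eq_zero_of_differentiableOn (φf u) 0 ((R:ℂ) + (s:ℂ) * I)
    ((φf_diff u).differentiableOn)
  simp only [Complex.zero_re, Complex.zero_im, Complex.add_re, Complex.add_im,
    Complex.ofReal_re, Complex.ofReal_im, Complex.mul_re, Complex.mul_im,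
    Complex.I_re, Complex.I_im, mul_zero, mul_one, zero_mul, sub_zero, add_zero, zero_add,
    Complex.ofReal_zero, smul_eq_mul] at h
  simp only [smul_eq_mul]
  linear_combination h

lemma integrableOn_top (u s : ℝ) (hs : 0 < s) :
    IntegrableOn (fun x : ℝ => φf u ((x:ℂ) + (s:ℂ) * I)) (Ioi 0) := by
  apply Integrable.integrableOn
  apply (((integrable_exp_neg_mul_sq hs).const_mul (rexp (s ^ 3 / 3 - u * s))).mono' ?_ ?_)
  · exact ((φf_cont u).comp (by fun_prop)).aestronglyMeasurable
  · filter_upwards with x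
    rw [φf_norm, ← Real.exp_add]
    exact le_of_eq (by ring_nf)

lemma exp_int_bound (s : ℝ) (hs : 0 < s) (R : ℝ) (hR : 1 ≤ R) :
    ∫ y in (0:ℝ)..s, rexp (-R ^ 2 * y) ≤ 1 / R ^ 2 := by
  have hR2 : (0:ℝ) < R ^ 2 := by positivity
  have hder : ∀ y ∈ uIcc (0:ℝ) s, HasDerivAt (fun y => -rexp (-R ^ 2 * y) / R ^ 2)
      (rexp (-R ^ 2 * y)) y := by
    intro y _
    have h1 : HasDerivAt (fun y : ℝ => -R ^ 2 * y) (-R ^ 2) y := by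
      simpa using (hasDerivAt_id y).const_mul (-R ^ 2)
    have := (h1.exp.neg).div_const (R ^ 2)
    refine this.congr_deriv ?_
    rw [div_eq_iff hR2.ne']; ring
  rw [intervalIntegral.integral_eq_sub_of_hasDerivAt hder
    (Continuous.intervalIntegrable (by fun_prop) _ _)]
  have h1 : 0 < rexp (-R ^ 2 * s) := Real.exp_pos _
  have h2 : rexp (-R ^ 2 * 0) = 1 := by norm_num
  rw [h2]
  have key : -rexp (-R ^ 2 * s) / R ^ 2 - -1 / R ^ 2 = (1 - rexp (-R ^ 2 * s)) / R ^ 2 := by ring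
  rw [key, div_le_div_iff₀ hR2 hR2]
  nlinarith

lemma tendsto_vert (u s : ℝ) (hs : 0 < s) :
    Tendsto (fun R : ℝ => ∫ y in (0:ℝ)..s, φf u ((R:ℂ) + (y:ℂ) * I)) atTop (nhds 0) := by
  apply squeeze_zero_norm' (a := fun R : ℝ => rexp (s ^ 3 / 3 + |u| * s) / R ^ 2)
  · filter_upwards [eventually_ge_atTop (1:ℝ)] with R hR
    calc ‖∫ y in (0:ℝ)..s, φf u ((R:ℂ) + (y:ℂ) * I)‖
        ≤ ∫ y in (0:ℝ)..s, ‖φf u ((R:ℂ) + (y:ℂ) * I)‖ :=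
          intervalIntegral.norm_integral_le_integral_norm hs.le
      _ = ∫ y in (0:ℝ)..s, rexp (y ^ 3 / 3 - u * y - R ^ 2 * y) := by
          simp_rw [φf_norm]
      _ ≤ ∫ y in (0:ℝ)..s, rexp (s ^ 3 / 3 + |u| * s) * rexp (-R ^ 2 * y) := by
          apply intervalIntegral.integral_mono_on hs.le
            (Continuous.intervalIntegrable (by fun_prop) _ _)
            (Continuous.intervalIntegrable (by fun_prop) _ _)
          intro y hy
          rw [← Real.exp_add]
          apply Real.exp_le_exp.2
          obtain ⟨h0, h1⟩ := hy
          have hy3 : y ^ 3 ≤ s ^ 3 := pow_le_pow_left₀ h0 h1 3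
          have : -u * y ≤ |u| * s := by
            have := neg_abs_le u
            nlinarith [abs_nonneg u]
          nlinarith
      _ = rexp (s ^ 3 / 3 + |u| * s) * ∫ y in (0:ℝ)..s, rexp (-R ^ 2 * y) := by
          rw [← intervalIntegral.integral_const_mul]
      _ ≤ rexp (s ^ 3 / 3 + |u| * s) * (1 / R ^ 2) := by
          apply mul_le_mul_of_nonneg_left (exp_int_bound s hs R hR) (Real.exp_pos _).le
      _ = rexp (s ^ 3 / 3 + |u| * s) / R ^ 2 := by ring
  · exact Tendsto.div_atTop tendsto_const_nhds (tendsto_pow_atTop (two_ne_zero))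

lemma airy_eq (s : ℝ) (hs : 0 < s) (u : ℝ) :
    Ai u = (1 / π) * (rexp (s ^ 3 / 3 - s * u) *
      ∫ x in Ioi (0:ℝ), rexp (-s * x ^ 2) * Real.cos (x ^ 3 / 3 + (u - s ^ 2) * x)) := by
  set L : ℂ := (∫ x in Ioi (0:ℝ), φf u ((x:ℂ) + (s:ℂ) * I))
      + I • ((∫ y in (0:ℝ)..s, rexp (y ^ 3 / 3 - u * y) : ℝ) : ℂ) with hL
  have hleft : (∫ y in (0:ℝ)..s, φf u ((y:ℂ) * I))
      = ((∫ y in (0:ℝ)..s, rexp (y ^ 3 / 3 - u * y) : ℝ) : ℂ) := by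
    rw [← intervalIntegral.integral_ofReal]
    apply intervalIntegral.integral_congr
    intro y _
    show φf u ((y:ℂ) * I) = ((rexp (y ^ 3 / 3 - u * y) : ℝ) : ℂ)
    have h := φf_apply u 0 y
    norm_num at h
    rw [h, Complex.ofReal_exp]
    simp only [Complex.ofReal_sub, Complex.ofReal_div, Complex.ofReal_pow, Complex.ofReal_mul,
      Complex.ofReal_ofNat]
  have hT : Tendsto (fun R : ℝ => ∫ x in (0:ℝ)..R, φf u x) atTop (nhds L) := by
    have h1 := MeasureTheory.intervalIntegral_tendsto_integral_Ioi 0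
      (integrableOn_top u s hs) tendsto_id
    have h2 := (tendsto_vert u s hs).const_smul (I : ℂ)
    have h3 := (h1.add (tendsto_const_nhds
      (x := I • ((∫ y in (0:ℝ)..s, rexp (y ^ 3 / 3 - u * y) : ℝ) : ℂ)))).sub h2
    simp only [smul_zero, sub_zero] at h3
    apply h3.congr
    intro R
    rw [rect u s R, hleft]
    rfl
  have hTre : Tendsto (fun R : ℝ => ∫ t in (0:ℝ)..R, Real.cos (t ^ 3 / 3 + u * t))
      atTop (nhds L.re) := by
    have h := (Complex.continuous_re.tendsto L).comp hT
    apply h.congr'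
    filter_upwards [eventually_ge_atTop (0:ℝ)] with R hR
    rw [Function.comp_apply, intervalIntegral.integral_of_le hR, intervalIntegral.integral_of_le hR]
    rw [← RCLike.re_to_complex, ← integral_re (Continuous.integrableOn_Ioc
      (show Continuous fun x : ℝ => φf u ↑x from (φf_cont u).comp Complex.continuous_ofReal))]
    apply MeasureTheory.integral_congr_ae
    filter_upwards with t
    have h := φf_re u t 0
    simp only [Complex.ofReal_zero, zero_mul, add_zero] at h
    rw [RCLike.re_to_complex, h]
    norm_num
  rw [Ai, hTre.limUnder_eq]
  congr 1
  have hre0 : (I • ((∫ y in (0:ℝ)..s, rexp (y ^ 3 / 3 - u * y) : ℝ) : ℂ)).re = 0 := by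
    simp [smul_eq_mul]
  rw [hL, Complex.add_re, hre0, add_zero]
  rw [← RCLike.re_to_complex, ← integral_re (integrableOn_top u s hs)]
  rw [← integral_const_mul]
  apply MeasureTheory.integral_congr_ae
  filter_upwards with x
  rw [RCLike.re_to_complex, φf_re]
  rw [show x ^ 3 / 3 + u * x - x * s ^ 2 = x ^ 3 / 3 + (u - s ^ 2) * x by ring,
    show s ^ 3 / 3 - u * s - x ^ 2 * s = (s ^ 3 / 3 - s * u) + (-s * x ^ 2) by ring,
    Real.exp_add]
  ring

/-! ### The Gaussian-damped function and its Fourier transform -/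

noncomputable def hfun (s x : ℝ) : ℂ :=
  Complex.exp (((-s * x ^ 2 : ℝ) : ℂ) + ((x ^ 3 / 3 : ℝ) : ℂ) * I)

noncomputable def pfun (s x : ℝ) : ℂ := ((-2 * s * x : ℝ) : ℂ) + ((x ^ 2 : ℝ) : ℂ) * I

noncomputable def qfun (s x : ℝ) : ℂ :=
  (((-2 * s : ℝ) : ℂ) + ((2 * x : ℝ) : ℂ) * I) + pfun s x ^ 2

lemma hfun_norm (s x : ℝ) : ‖hfun s x‖ = rexp (-s * x ^ 2) := by
  rw [hfun, Complex.norm_exp]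
  simp [← Complex.ofReal_pow]

lemma hfun_cont (s : ℝ) : Continuous (hfun s) := by
  unfold hfun; fun_prop

lemma hfun_zero (s : ℝ) : hfun s 0 = 1 := by
  simp [hfun]

lemma integrable_hfun (s : ℝ) (hs : 0 < s) : Integrable (hfun s) := by
  apply (integrable_exp_neg_mul_sq hs).mono' (hfun_cont s).aestronglyMeasurable
  filter_upwards with x
  rw [hfun_norm]

lemma hasDerivAt_hfun (s x : ℝ) : HasDerivAt (hfun s) (pfun s x * hfun s x) x := by
  have ha : HasDerivAt (fun x : ℝ => (-s * x ^ 2 : ℝ)) (-2 * s * x) x := by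
    have := (hasDerivAt_pow 2 x).const_mul (-s)
    refine this.congr_deriv ?_
    push_cast; ring
  have hb : HasDerivAt (fun x : ℝ => (x ^ 3 / 3 : ℝ)) (x ^ 2) x := by
    have := (hasDerivAt_pow 3 x).div_const 3
    refine this.congr_deriv ?_
    push_cast; ring
  have h1 : HasDerivAt (fun x : ℝ => (((-s * x ^ 2 : ℝ) : ℂ) + ((x ^ 3 / 3 : ℝ) : ℂ) * I))
      (pfun s x) x := (ha.ofReal_comp).add ((hb.ofReal_comp).mul_const I)
  have := h1.cexp
  rw [show Complex.exp (((-s * x ^ 2 : ℝ) : ℂ) + ((x ^ 3 / 3 : ℝ) : ℂ) * I) * pfun s x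
    = pfun s x * hfun s x from mul_comm _ _] at this
  exact this

lemma hasDerivAt_pfun (s x : ℝ) :
    HasDerivAt (pfun s) (((-2 * s : ℝ) : ℂ) + ((2 * x : ℝ) : ℂ) * I) x := by
  have ha : HasDerivAt (fun x : ℝ => (-2 * s * x : ℝ)) (-2 * s) x := by
    simpa using (hasDerivAt_id x).const_mul (-2 * s)
  have hb : HasDerivAt (fun x : ℝ => (x ^ 2 : ℝ)) (2 * x) x := by
    simpa using hasDerivAt_pow 2 x
  exact (ha.ofReal_comp).add ((hb.ofReal_comp).mul_const I)

lemma hasDerivAt_h1 (s x : ℝ) :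
    HasDerivAt (fun x => pfun s x * hfun s x) (qfun s x * hfun s x) x := by
  have := (hasDerivAt_pfun s x).mul (hasDerivAt_hfun s x)
  refine this.congr_deriv ?_
  unfold qfun
  ring

lemma integrable_polygauss (s : ℝ) (hs : 0 < s) (n : ℕ) :
    Integrable (fun x : ℝ => |x| ^ n * rexp (-s * x ^ 2)) := by
  have hn : (-1 : ℝ) < n := lt_of_lt_of_le neg_one_lt_zero (Nat.cast_nonneg n)
  have h := integrable_rpow_mul_exp_neg_mul_sq hs hn
  have h2 : Integrable (fun x : ℝ => x ^ n * rexp (-s * x ^ 2)) := by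
    apply h.congr
    filter_upwards with x
    rw [Real.rpow_natCast]
  apply h2.abs.congr
  filter_upwards with x
  rw [abs_mul, _root_.abs_pow, abs_of_pos (Real.exp_pos _)]

lemma pfun_norm_le (s x : ℝ) : ‖pfun s x‖ ≤ 2 * |s| * |x| + |x| ^ 2 := by
  refine (norm_add_le _ _).trans ?_
  have h1 : ‖((-2 * s * x : ℝ) : ℂ)‖ = 2 * |s| * |x| := by
    rw [Complex.norm_real, Real.norm_eq_abs, abs_mul, abs_mul]
    norm_num
  have h2 : ‖((x ^ 2 : ℝ) : ℂ) * I‖ = |x| ^ 2 := by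
    rw [norm_mul, Complex.norm_I, mul_one, Complex.norm_real, Real.norm_eq_abs, _root_.abs_pow]
  rw [h1, h2]

lemma integrable_h1 (s : ℝ) (hs : 0 < s) :
    Integrable (fun x => pfun s x * hfun s x) := by
  apply Integrable.mono'
    (f := fun x => pfun s x * hfun s x)
    (g := fun x => 2 * |s| * (|x| ^ 1 * rexp (-s * x ^ 2)) + |x| ^ 2 * rexp (-s * x ^ 2))
  · exact (((integrable_polygauss s hs 1).const_mul _).add (integrable_polygauss s hs 2))
  · apply Continuous.aestronglyMeasurable
    unfold pfun hfun; fun_prop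
  · filter_upwards with x
    rw [norm_mul, hfun_norm]
    calc ‖pfun s x‖ * rexp (-s * x ^ 2)
        ≤ (2 * |s| * |x| + |x| ^ 2) * rexp (-s * x ^ 2) :=
          mul_le_mul_of_nonneg_right (pfun_norm_le s x) (Real.exp_pos _).le
      _ = 2 * |s| * (|x| ^ 1 * rexp (-s * x ^ 2)) + |x| ^ 2 * rexp (-s * x ^ 2) := by ring

lemma integrable_h2 (s : ℝ) (hs : 0 < s) :
    Integrable (fun x => qfun s x * hfun s x) := by
  apply Integrable.mono'
    (f := fun x => qfun s x * hfun s x)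
    (g := fun x => 2 * |s| * rexp (-s * x ^ 2) + 2 * (|x| ^ 1 * rexp (-s * x ^ 2))
      + (4 * s ^ 2) * (|x| ^ 2 * rexp (-s * x ^ 2)) + (4 * |s|) * (|x| ^ 3 * rexp (-s * x ^ 2))
      + |x| ^ 4 * rexp (-s * x ^ 2))
  · exact (((((integrable_exp_neg_mul_sq hs).const_mul _).add
      ((integrable_polygauss s hs 1).const_mul _)).add
      ((integrable_polygauss s hs 2).const_mul _)).add
      ((integrable_polygauss s hs 3).const_mul _)).add (integrable_polygauss s hs 4)
  · apply Continuous.aestronglyMeasurable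
    unfold qfun pfun hfun; fun_prop
  · filter_upwards with x
    rw [norm_mul, hfun_norm]
    have hq : ‖qfun s x‖ ≤ 2 * |s| + 2 * |x| + (2 * |s| * |x| + |x| ^ 2) ^ 2 := by
      rw [qfun]
      refine (norm_add_le _ _).trans ?_
      have h1 : ‖((-2 * s : ℝ) : ℂ) + ((2 * x : ℝ) : ℂ) * I‖ ≤ 2 * |s| + 2 * |x| := by
        refine (norm_add_le _ _).trans ?_
        rw [norm_mul, Complex.norm_I, mul_one, Complex.norm_real, Complex.norm_real,
          Real.norm_eq_abs, Real.norm_eq_abs, abs_mul, abs_mul]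
        norm_num
      have h2 : ‖pfun s x ^ 2‖ ≤ (2 * |s| * |x| + |x| ^ 2) ^ 2 := by
        rw [norm_pow]
        exact pow_le_pow_left₀ (norm_nonneg _) (pfun_norm_le s x) 2
      exact add_le_add h1 h2
    calc ‖qfun s x‖ * rexp (-s * x ^ 2)
        ≤ (2 * |s| + 2 * |x| + (2 * |s| * |x| + |x| ^ 2) ^ 2) * rexp (-s * x ^ 2) :=
          mul_le_mul_of_nonneg_right hq (Real.exp_pos _).le
      _ ≤ _ := by
          rw [show (2 * |s| + 2 * |x| + (2 * |s| * |x| + |x| ^ 2) ^ 2) * rexp (-s * x ^ 2)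
            = 2 * |s| * rexp (-s * x ^ 2) + 2 * (|x| ^ 1 * rexp (-s * x ^ 2))
              + (4 * (|s| * |s|)) * (|x| ^ 2 * rexp (-s * x ^ 2))
              + (4 * |s|) * (|x| ^ 3 * rexp (-s * x ^ 2))
              + |x| ^ 4 * rexp (-s * x ^ 2) by ring]
          have : |s| * |s| = s ^ 2 := by rw [← abs_mul, ← sq, abs_of_pos (by positivity)]
          rw [this]

lemma differentiable_hfun (s : ℝ) : Differentiable ℝ (hfun s) :=
  fun x => (hasDerivAt_hfun s x).differentiableAt

lemma deriv_hfun (s : ℝ) : deriv (hfun s) = fun x => pfun s x * hfun s x :=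
  funext fun x => (hasDerivAt_hfun s x).deriv

lemma differentiable_h1 (s : ℝ) : Differentiable ℝ (fun x => pfun s x * hfun s x) :=
  fun x => (hasDerivAt_h1 s x).differentiableAt

lemma deriv_h1 (s : ℝ) : deriv (fun x => pfun s x * hfun s x) = fun x => qfun s x * hfun s x :=
  funext fun x => (hasDerivAt_h1 s x).deriv

lemma fourier_h2 (s : ℝ) (hs : 0 < s) (ξ : ℝ) :
    𝓕 (fun x => qfun s x * hfun s x) ξ = (2 * π * I * ξ) • ((2 * π * I * ξ) • 𝓕 (hfun s) ξ) := by
  have A := Real.fourier_deriv (integrable_hfun s hs) (differentiable_hfun s)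
    (by rw [deriv_hfun]; exact integrable_h1 s hs)
  rw [deriv_hfun] at A
  have B := Real.fourier_deriv (integrable_h1 s hs) (differentiable_h1 s)
    (by rw [deriv_h1]; exact integrable_h2 s hs)
  rw [deriv_h1] at B
  rw [congrFun B ξ, congrFun A ξ]

lemma norm_fourier_le (f : ℝ → ℂ) (ξ : ℝ) : ‖𝓕 f ξ‖ ≤ ∫ x : ℝ, ‖f x‖ :=
  VectorFourier.norm_fourierIntegral_le_integral_norm _ _ _ _ _

lemma cont_fourier_hfun (s : ℝ) (hs : 0 < s) : Continuous (𝓕 (hfun s)) :=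
  VectorFourier.fourierIntegral_continuous Real.continuous_fourierChar
    (by exact continuous_inner) (integrable_hfun s hs)

lemma fourier_decay (s : ℝ) (hs : 0 < s) (ξ : ℝ) :
    ‖𝓕 (hfun s) ξ‖ ≤ ((∫ x : ℝ, ‖hfun s x‖) + (∫ x : ℝ, ‖qfun s x * hfun s x‖) / (2 * π) ^ 2)
      * (1 + ξ ^ 2)⁻¹ := by
  set M0 := ∫ x : ℝ, ‖hfun s x‖ with hM0
  set M2 := ∫ x : ℝ, ‖qfun s x * hfun s x‖ with hM2
  have h0 : ‖𝓕 (hfun s) ξ‖ ≤ M0 := norm_fourier_le _ _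
  have h2 : (2 * π) ^ 2 * ξ ^ 2 * ‖𝓕 (hfun s) ξ‖ ≤ M2 := by
    have := norm_fourier_le (fun x => qfun s x * hfun s x) ξ
    rw [fourier_h2 s hs ξ] at this
    rw [norm_smul, norm_smul] at this
    have hn : ‖(2 * π * I * ξ : ℂ)‖ = 2 * π * |ξ| := by
      rw [show (2 * π * I * ξ : ℂ) = ((2 * π : ℝ) : ℂ) * (I * (ξ : ℂ)) by push_cast; ring]
      rw [norm_mul, norm_mul, Complex.norm_I, one_mul, Complex.norm_real, Complex.norm_real,
        Real.norm_eq_abs, Real.norm_eq_abs, abs_of_pos (by positivity : (0:ℝ) < 2 * π)]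
    rw [hn] at this
    have habs : |ξ| * |ξ| = ξ ^ 2 := by rw [abs_mul_abs_self ξ, sq]
    calc (2 * π) ^ 2 * ξ ^ 2 * ‖𝓕 (hfun s) ξ‖
        = 2 * π * |ξ| * (2 * π * |ξ| * ‖𝓕 (hfun s) ξ‖) := by rw [← habs]; ring
      _ ≤ M2 := this
  have hpos : (0:ℝ) < 1 + ξ ^ 2 := by positivity
  rw [← div_eq_mul_inv, le_div_iff₀ hpos]
  have hM0nn : 0 ≤ M0 := by
    rw [hM0]; positivity
  have h2' : ξ ^ 2 * ‖𝓕 (hfun s) ξ‖ ≤ M2 / (2 * π) ^ 2 := by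
    rw [le_div_iff₀ (by positivity : (0:ℝ) < (2 * π) ^ 2)]
    nlinarith [h2]
  nlinarith [norm_nonneg (𝓕 (hfun s) ξ)]

lemma integrable_fourier_hfun (s : ℝ) (hs : 0 < s) : Integrable (𝓕 (hfun s)) := by
  apply Integrable.mono'
    (g := fun ξ : ℝ => ((∫ x : ℝ, ‖hfun s x‖) + (∫ x : ℝ, ‖qfun s x * hfun s x‖) / (2 * π) ^ 2)
      * (1 + ξ ^ 2)⁻¹)
  · exact integrable_inv_one_add_sq.const_mul _
  · exact (cont_fourier_hfun s hs).aestronglyMeasurable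
  · filter_upwards with ξ
    exact fourier_decay s hs ξ

lemma integral_fourier_hfun (s : ℝ) (hs : 0 < s) : ∫ ξ : ℝ, 𝓕 (hfun s) ξ = 1 := by
  have hinv := (hfun_cont s).fourierInv_fourier_eq (integrable_hfun s hs)
    (integrable_fourier_hfun s hs)
  have h0 := congrFun hinv 0
  rw [Real.fourierInv_eq_fourier_neg, neg_zero, hfun_zero] at h0
  rw [← h0, Real.fourier_real_eq]
  apply integral_congr_ae
  filter_upwards with ξ
  norm_num

/-! ### Evaluating the Laplace transform -/

lemma integrable_P (s v : ℝ) (hs : 0 < s) :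
    Integrable (fun x : ℝ => rexp (-s * x ^ 2) * Real.cos (x ^ 3 / 3 + v * x)) := by
  apply (integrable_exp_neg_mul_sq hs).mono'
    ((by fun_prop : Continuous fun x : ℝ => rexp (-s * x ^ 2) * Real.cos (x ^ 3 / 3 + v * x)).aestronglyMeasurable)
  filter_upwards with x
  rw [Real.norm_eq_abs, abs_mul, abs_of_pos (Real.exp_pos _)]
  exact mul_le_of_le_one_right (Real.exp_pos _).le (abs_cos_le_one _)

lemma integrable_G (s v : ℝ) (hs : 0 < s) :
    Integrable (fun x : ℝ => Complex.exp (((x * v : ℝ) : ℂ) * I) • hfun s x) := by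
  apply (integrable_exp_neg_mul_sq hs).mono'
  · apply Continuous.aestronglyMeasurable
    refine Continuous.smul (f := fun x : ℝ => Complex.exp (((x * v : ℝ) : ℂ) * I)) ?_ (hfun_cont s)
    fun_prop
  · filter_upwards with x
    rw [norm_smul, hfun_norm, Complex.norm_exp_ofReal_mul_I, one_mul]

lemma P_full (s v : ℝ) (hs : 0 < s) :
    ∫ x : ℝ, rexp (-s * x ^ 2) * Real.cos (x ^ 3 / 3 + v * x)
      = (𝓕 (hfun s) (-(v / (2 * π)))).re := by
  rw [Real.fourier_real_eq_integral_exp_smul]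
  have harg : ∀ x : ℝ, (-2) * π * x * (-(v / (2 * π))) = x * v := by
    intro x; field_simp
  simp_rw [harg]
  have := integral_re (integrable_G s v hs)
  simp only [RCLike.re_to_complex] at this
  rw [← this]
  apply integral_congr_ae
  filter_upwards with x
  have hre : (((x * v : ℝ) : ℂ) * I + (((-s * x ^ 2 : ℝ) : ℂ) + ((x ^ 3 / 3 : ℝ) : ℂ) * I)).re
      = -s * x ^ 2 := by simp [← Complex.ofReal_pow]
  have him : (((x * v : ℝ) : ℂ) * I + (((-s * x ^ 2 : ℝ) : ℂ) + ((x ^ 3 / 3 : ℝ) : ℂ) * I)).im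
      = x * v + x ^ 3 / 3 := by simp [← Complex.ofReal_pow]
  rw [smul_eq_mul, hfun, ← Complex.exp_add, Complex.exp_re, hre, him]
  congr 1
  ring

lemma P_halfline (s v : ℝ) (hs : 0 < s) :
    ∫ x in Set.Ioi (0:ℝ), rexp (-s * x ^ 2) * Real.cos (x ^ 3 / 3 + v * x)
      = (1 / 2) * (𝓕 (hfun s) (-(v / (2 * π)))).re := by
  have hIic : ∫ x in Set.Iic (0:ℝ), rexp (-s * x ^ 2) * Real.cos (x ^ 3 / 3 + v * x)
      = ∫ x in Set.Ioi (0:ℝ), rexp (-s * x ^ 2) * Real.cos (x ^ 3 / 3 + v * x) := by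
    have h1 := integral_comp_neg_Ioi (0:ℝ)
      (fun x => rexp (-s * x ^ 2) * Real.cos (x ^ 3 / 3 + v * x))
    rw [neg_zero] at h1
    rw [← h1]
    apply integral_congr_ae
    filter_upwards with x
    have harg : (-x) ^ 3 / 3 + v * (-x) = -(x ^ 3 / 3 + v * x) := by ring
    show rexp (-s * (-x) ^ 2) * Real.cos ((-x) ^ 3 / 3 + v * (-x))
      = rexp (-s * x ^ 2) * Real.cos (x ^ 3 / 3 + v * x)
    rw [neg_sq, harg, Real.cos_neg]
  have hsplit := integral_add_compl (measurableSet_Iic (a := (0:ℝ))) (integrable_P s v hs)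
  rw [Set.compl_Iic] at hsplit
  have hfull := P_full s v hs
  linarith [hsplit, hIic, hfull]

lemma key_integrand (s : ℝ) (hs : 0 < s) (u : ℝ) :
    Ai u * rexp (s * u) =
      rexp (s ^ 3 / 3) / (2 * π) * (𝓕 (hfun s) (-((u - s ^ 2) / (2 * π)))).re := by
  rw [airy_eq s hs u, P_halfline s (u - s ^ 2) hs]
  have hexp : rexp (s ^ 3 / 3 - s * u) * rexp (s * u) = rexp (s ^ 3 / 3) := by
    rw [← Real.exp_add]; ring_nf
  calc (1 / π) * (rexp (s ^ 3 / 3 - s * u) *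
        ((1 / 2) * (𝓕 (hfun s) (-((u - s ^ 2) / (2 * π)))).re)) * rexp (s * u)
      = (rexp (s ^ 3 / 3 - s * u) * rexp (s * u)) * (1 / (2 * π))
        * (𝓕 (hfun s) (-((u - s ^ 2) / (2 * π)))).re := by ring
    _ = rexp (s ^ 3 / 3) / (2 * π) * (𝓕 (hfun s) (-((u - s ^ 2) / (2 * π)))).re := by
        rw [hexp]; ring

lemma integrable_W (s : ℝ) (hs : 0 < s) :
    Integrable (fun v : ℝ => 𝓕 (hfun s) (-(v / (2 * π)))) := by
  have h2π : ((-(2 * π)⁻¹ : ℝ)) ≠ 0 := by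
    simp [Real.pi_ne_zero]
  have h := (integrable_comp_mul_left_iff (𝓕 (hfun s)) h2π).2 (integrable_fourier_hfun s hs)
  apply h.congr
  filter_upwards with v
  congr 1
  field_simp

lemma part1 (s : ℝ) (hs : 0 < s) :
    Integrable (fun u : ℝ => Ai u * rexp (s * u)) ∧
      ∫ u : ℝ, Ai u * rexp (s * u) = rexp (s ^ 3 / 3) := by
  have hW2 : Integrable (fun u : ℝ => 𝓕 (hfun s) (-((u - s ^ 2) / (2 * π)))) :=
    (integrable_W s hs).comp_sub_right (s ^ 2)
  have hfeq : (fun u : ℝ => Ai u * rexp (s * u))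
      = fun u => rexp (s ^ 3 / 3) / (2 * π) * (𝓕 (hfun s) (-((u - s ^ 2) / (2 * π)))).re :=
    funext (key_integrand s hs)
  have hW2re : Integrable (fun u : ℝ => (𝓕 (hfun s) (-((u - s ^ 2) / (2 * π)))).re) := by
    have := hW2.re
    simpa only [RCLike.re_to_complex] using this
  constructor
  · rw [hfeq]
    exact hW2re.const_mul _
  · rw [hfeq, integral_const_mul]
    have hre : ∫ u : ℝ, (𝓕 (hfun s) (-((u - s ^ 2) / (2 * π)))).re
        = (∫ u : ℝ, 𝓕 (hfun s) (-((u - s ^ 2) / (2 * π)))).re := by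
      have := integral_re hW2
      simpa only [RCLike.re_to_complex] using this
    rw [hre, integral_sub_right_eq_self (fun v => 𝓕 (hfun s) (-(v / (2 * π)))) (s ^ 2)]
    have hscale : ∫ v : ℝ, 𝓕 (hfun s) (-(v / (2 * π))) = ((2 * π : ℝ)) • ∫ ξ : ℝ, 𝓕 (hfun s) ξ := by
      have h := MeasureTheory.Measure.integral_comp_mul_left (𝓕 (hfun s)) (-(2 * π)⁻¹)
      have habs : |((-(2 * π)⁻¹ : ℝ))⁻¹| = 2 * π := by
        rw [← inv_neg, inv_inv, abs_neg, abs_of_pos (by positivity)]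
      rw [habs] at h
      rw [← h]
      apply integral_congr_ae
      filter_upwards with v
      congr 1
      field_simp
    rw [hscale, integral_fourier_hfun s hs]
    rw [Complex.real_smul, mul_one]
    simp only [Complex.ofReal_re]
    field_simp

end AiryAux

theorem airy_laplace_transform :
    (∀ s : ℝ, 0 < s →
      MeasureTheory.Integrable (fun u : ℝ => Ai u * Real.exp (s * u)) ∧
      ∫ u : ℝ, Ai u * Real.exp (s * u) = Real.exp (s ^ 3 / 3)) ∧
    (∀ t : ℝ, 0 < t → ∀ n : ℕ, 1 ≤ n →
      Real.exp (t * (n : ℝ) ^ 3 / 24) =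
        ∫ u : ℝ, Ai u * Real.exp ((t / 8) ^ ((1 : ℝ) / 3) * (n : ℝ) * u)) := by
  constructor
  · exact fun s hs => AiryAux.part1 s hs
  · intro t ht n hn
    have hn' : (0:ℝ) < n := by
      have : (1:ℝ) ≤ n := by exact_mod_cast hn
      linarith
    have ht8 : (0:ℝ) < t / 8 := by linarith
    set s : ℝ := (t / 8) ^ ((1:ℝ) / 3) * (n : ℝ) with hsdef
    have hs : 0 < s := mul_pos (Real.rpow_pos_of_pos ht8 _) hn'
    have h := (AiryAux.part1 s hs).2
    have hc1 : ((t / 8) ^ ((1:ℝ) / 3)) ^ (3:ℕ) = t / 8 := by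
      rw [← Real.rpow_natCast ((t / 8) ^ ((1:ℝ) / 3)) 3, ← Real.rpow_mul ht8.le]
      norm_num
    have hcube : s ^ 3 = t * (n : ℝ) ^ 3 / 8 := by
      rw [hsdef, mul_pow, hc1]; ring
    rw [show (t * (n:ℝ) ^ 3 / 24) = s ^ 3 / 3 by rw [hcube]; ring, ← h]
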